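/- Fix integers r ≥ 3 and d ≥ 2, and an index 1 ≤ i ≤ d. In R = k[a_1,…,a_d,b_1,…,b_d,e_1,…,e_{2r−2}], let J be the ideal generated by F_d ∪ {a_k e_2 e_4 ⋯ e_{2r−2} : i < k ≤ d}, where F_d = {a_k b_l : 1 ≤ l < k ≤ d}. Then the ideal quotient J : ⟨a_i e_2 e_4 ⋯ e_{2r−2}⟩ equals the ideal generated by the d − 1 variables a_{i+1}, …, a_d, b_1, …, b_{i−1}; explicitly, it is ⟨a_2,…,a_d⟩ if i = 1, ⟨a_{i+1},…,a_d,b_1,…,b_{i−1}⟩ if 1 < i < d, and ⟨b_1,…,b_{d−1}⟩ if i = d. -/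

import Mathlib

open MvPolynomial

/-- The edge variables of `G_{r,d}`: `a_1, …, a_d`, `b_1, …, b_d` and
`e_1, …, e_{2r-2}`.  We use 1-based names via 0-based `Fin` indices:
`EVar.a ⟨i-1,_⟩` is `a_i`, etc. -/
inductive EVar (d r : ℕ) : Type where
  | a : Fin d → EVar d r
  | b : Fin d → EVar d r
  | e : Fin (2 * r - 2) → EVar d r
deriving DecidableEq

/-- The monomial `e_2 e_4 ⋯ e_{2r-2}` (product of the even-indexed `e`-variables;
in the 0-indexed encoding these are the `EVar.e t` with `t.val` odd). -/
noncomputable def evenEProd (k : Type) [Field k] (d r : ℕ) : MvPolynomial (EVar d r) k :=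
  ∏ t ∈ Finset.univ.filter (fun t : Fin (2 * r - 2) => t.val % 2 = 1), X (EVar.e t)

/-- Auxiliary: the "kill the bad variables" substitution sends a monomial with no
bad variables to itself. -/
theorem aeval_kill_monomial_good {k σ : Type} [CommRing k] [DecidableEq σ] (bad : σ → Bool)
    (m : σ →₀ ℕ) (c : k) (hgood : ∀ v ∈ m.support, bad v = false) :
    aeval (fun v => if bad v then 0 else X v : σ → MvPolynomial σ k) (monomial m c)
      = monomial m c := by
  rw [aeval_monomial, monomial_eq, algebraMap_eq]
  congr 1
  apply Finsupp.prod_congr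
  intro v hv
  simp [hgood v hv]

/-- Auxiliary: if setting the bad variables to `0` kills `f`, then `f` lies in the
ideal generated by the bad variables. -/
theorem mem_span_X_of_aeval_eq_zero {k σ : Type} [CommRing k] [DecidableEq σ] (bad : σ → Bool)
    (f : MvPolynomial σ k)
    (h : aeval (fun v => if bad v then 0 else X v : σ → MvPolynomial σ k) f = 0) :
    f ∈ Ideal.span (X '' {v | bad v = true} : Set (MvPolynomial σ k)) := by
  rw [mem_ideal_span_X_image]
  intro m hm
  by_contra hc
  push_neg at hc
  simp only [Set.mem_setOf_eq] at hc
  have hgood : ∀ v ∈ m.support, bad v = false := by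
    intro v hv
    cases h' : bad v with
    | false => rfl
    | true => exact absurd (hc v h') (Finsupp.mem_support_iff.mp hv)
  set g : σ → MvPolynomial σ k := fun v => if bad v then 0 else X v with hg
  have key : coeff m (aeval g f) = coeff m f := by
    conv_lhs => rw [f.as_sum]
    rw [map_sum, coeff_sum, Finset.sum_eq_single m]
    · rw [aeval_kill_monomial_good bad m _ hgood]
      simp [coeff_monomial]
    · intro m' hm' hne
      by_cases hgm' : ∀ v ∈ m'.support, bad v = false
      · rw [aeval_kill_monomial_good bad m' _ hgm']
        simp [coeff_monomial, hne]
      · push_neg at hgm'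
        obtain ⟨v, hv, hbv⟩ := hgm'
        have hbv' : bad v = true := by
          cases h' : bad v with
          | false => exact absurd h' hbv
          | true => rfl
        rw [aeval_monomial]
        have hz : (m'.prod fun v e => g v ^ e) = 0 := by
          rw [Finsupp.prod]
          apply Finset.prod_eq_zero hv
          rw [hg]
          simp [hbv', zero_pow (Finsupp.mem_support_iff.mp hv)]
        simp [hz]
    · intro hms
      exact absurd hm hms
  rw [h, coeff_zero] at key
  exact (Finsupp.mem_support_iff.mp hm : coeff m f ≠ 0) key.symm

/-- The "bad" variables for the colon-ideal computation: `a_{i+1},…,a_d` and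
`b_1,…,b_{i-1}` (0-indexed: `a j` with `i ≤ j`, `b j` with `j + 1 < i`). -/
def badVar (d r i : ℕ) : EVar d r → Bool
  | .a j => decide (i ≤ j.val)
  | .b j => decide (j.val + 1 < i)
  | .e _ => false

@[simp] theorem badVar_a (d r i : ℕ) (j : Fin d) :
    badVar d r i (EVar.a j) = decide (i ≤ j.val) := rfl
@[simp] theorem badVar_b (d r i : ℕ) (j : Fin d) :
    badVar d r i (EVar.b j) = decide (j.val + 1 < i) := rfl
@[simp] theorem badVar_e (d r i : ℕ) (j : Fin (2 * r - 2)) :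
    badVar d r i (EVar.e j) = false := rfl

/-- Fix `r ≥ 3`, `d ≥ 2` and `1 ≤ i ≤ d`.  In
`R = k[a_1,…,a_d,b_1,…,b_d,e_1,…,e_{2r-2}]`, let `J` be the ideal generated by
`F_d ∪ {a_m e_2 e_4 ⋯ e_{2r-2} : i < m ≤ d}`, where `F_d = {a_m b_l : 1 ≤ l < m ≤ d}`.
Then `J : ⟨a_i e_2 e_4 ⋯ e_{2r-2}⟩` is the ideal generated by the `d − 1` variables
`a_{i+1}, …, a_d, b_1, …, b_{i-1}` (which is `⟨a_2,…,a_d⟩` if `i = 1`,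
`⟨a_{i+1},…,a_d,b_1,…,b_{i-1}⟩` if `1 < i < d`, and `⟨b_1,…,b_{d-1}⟩` if `i = d`). -/
theorem colon_ideal_Hrd_case (k : Type) [Field k] (d r : ℕ) (hd : 2 ≤ d) (hr : 3 ≤ r)
    (i : ℕ) (hi : 1 ≤ i) (hid : i ≤ d) :
    (Ideal.span
        ({p : MvPolynomial (EVar d r) k | ∃ l m : ℕ, ∃ (_ : 1 ≤ l) (_ : l < m) (_ : m ≤ d),
            p = X (EVar.a ⟨m - 1, by omega⟩) * X (EVar.b ⟨l - 1, by omega⟩)} ∪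
         {p : MvPolynomial (EVar d r) k | ∃ m : ℕ, ∃ (_ : i < m) (_ : m ≤ d),
            p = X (EVar.a ⟨m - 1, by omega⟩) * evenEProd k d r})).colon
      (Ideal.span {X (EVar.a ⟨i - 1, by omega⟩) * evenEProd k d r}) =
    Ideal.span
      ({p : MvPolynomial (EVar d r) k | ∃ m : ℕ, ∃ (_ : i < m) (_ : m ≤ d),
          p = X (EVar.a ⟨m - 1, by omega⟩)} ∪
       {p : MvPolynomial (EVar d r) k | ∃ l : ℕ, ∃ (_ : 1 ≤ l) (_ : l < i),
          p = X (EVar.b ⟨l - 1, by omega⟩)}) ∧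
    ({p : MvPolynomial (EVar d r) k | ∃ m : ℕ, ∃ (_ : i < m) (_ : m ≤ d),
          p = X (EVar.a ⟨m - 1, by omega⟩)} ∪
       {p : MvPolynomial (EVar d r) k | ∃ l : ℕ, ∃ (_ : 1 ≤ l) (_ : l < i),
          p = X (EVar.b ⟨l - 1, by omega⟩)}).ncard = d - 1 := by
  classical
  have hXa_inj : Function.Injective (EVar.a : Fin d → EVar d r) := by
    intro x y h; injection h
  have hXb_inj : Function.Injective (EVar.b : Fin d → EVar d r) := by
    intro x y h; injection h
  have hset : ({p : MvPolynomial (EVar d r) k | ∃ m : ℕ, ∃ (_ : i < m) (_ : m ≤ d),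
          p = X (EVar.a ⟨m - 1, by omega⟩)} ∪
        {p : MvPolynomial (EVar d r) k | ∃ l : ℕ, ∃ (_ : 1 ≤ l) (_ : l < i),
          p = X (EVar.b ⟨l - 1, by omega⟩)}) =
      X '' {v : EVar d r | badVar d r i v = true} := by
    ext p
    simp only [Set.mem_union, Set.mem_setOf_eq, Set.mem_image]
    constructor
    · rintro (⟨m, hm1, hm2, rfl⟩ | ⟨l, hl1, hl2, rfl⟩)
      · exact ⟨EVar.a ⟨m - 1, by omega⟩, by simp; omega, rfl⟩
      · exact ⟨EVar.b ⟨l - 1, by omega⟩, by simp; omega, rfl⟩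
    · rintro ⟨v, hv, rfl⟩
      cases v with
      | a j =>
        simp only [Set.mem_setOf_eq, badVar_a, decide_eq_true_eq] at hv
        left
        refine ⟨j.val + 1, by omega, by have := j.isLt; omega, ?_⟩
        exact congrArg X (congrArg EVar.a (Fin.ext (by simp)))
      | b j =>
        simp only [Set.mem_setOf_eq, badVar_b, decide_eq_true_eq] at hv
        right
        refine ⟨j.val + 1, by omega, by omega, ?_⟩
        exact congrArg X (congrArg EVar.b (Fin.ext (by simp)))
      | e j => simp at hv
  set E : MvPolynomial (EVar d r) k := evenEProd k d r with hE
  have hEne : E ≠ 0 := by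
    rw [hE, evenEProd]
    exact Finset.prod_ne_zero_iff.mpr fun t _ => X_ne_zero _
  constructor
  · apply le_antisymm
    · intro f hf
      rw [Ideal.mem_colon_span_singleton] at hf
      set g : EVar d r → MvPolynomial (EVar d r) k :=
        fun v => if badVar d r i v then 0 else X v with hg
      have hgE : aeval g E = E := by
        rw [hE, evenEProd, map_prod]
        refine Finset.prod_congr rfl fun t _ => ?_
        rw [aeval_X, hg]
        simp
      have hker : Ideal.span
          ({p : MvPolynomial (EVar d r) k | ∃ l m : ℕ, ∃ (_ : 1 ≤ l) (_ : l < m) (_ : m ≤ d),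
              p = X (EVar.a ⟨m - 1, by omega⟩) * X (EVar.b ⟨l - 1, by omega⟩)} ∪
           {p : MvPolynomial (EVar d r) k | ∃ m : ℕ, ∃ (_ : i < m) (_ : m ≤ d),
              p = X (EVar.a ⟨m - 1, by omega⟩) * E}) ≤
          RingHom.ker (aeval g : MvPolynomial (EVar d r) k →ₐ[k] MvPolynomial (EVar d r) k) := by
        rw [Ideal.span_le]
        rintro p (⟨l, m, hl1, hlm, hmd, rfl⟩ | ⟨m, him, hmd, rfl⟩)
        · simp only [SetLike.mem_coe, RingHom.mem_ker, map_mul, aeval_X, hg]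
          by_cases hcase : i ≤ m - 1
          · simp [hcase]
          · have hli : (l - 1) + 1 < i := by omega
            simp [hli]
        · simp only [SetLike.mem_coe, RingHom.mem_ker, map_mul, aeval_X, hgE, hg]
          have hmi : i ≤ m - 1 := by omega
          simp [hmi]
      have h0 := hker hf
      rw [RingHom.mem_ker, map_mul, map_mul, aeval_X, hgE] at h0
      have hXa : g (EVar.a ⟨i - 1, by omega⟩) = X (EVar.a ⟨i - 1, by omega⟩) := by
        rw [hg]
        have hii : ¬ i ≤ i - 1 := by omega
        simp [hii]
      rw [hXa] at h0
      rcases mul_eq_zero.mp h0 with h0 | h0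
      · rw [hset]
        rw [hg] at h0
        exact mem_span_X_of_aeval_eq_zero (badVar d r i) f h0
      · exact absurd h0 (mul_ne_zero (X_ne_zero _) hEne)
    · rw [Ideal.span_le]
      rintro p (⟨m, him, hmd, rfl⟩ | ⟨l, hl1, hli, rfl⟩)
      · rw [SetLike.mem_coe, Ideal.mem_colon_span_singleton]
        have heq : X (EVar.a (⟨m - 1, by omega⟩ : Fin d)) *
              (X (EVar.a (⟨i - 1, by omega⟩ : Fin d)) * E)
            = X (EVar.a (⟨i - 1, by omega⟩ : Fin d)) *
              (X (EVar.a (⟨m - 1, by omega⟩ : Fin d)) * E) := by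
          ring
        rw [heq]
        exact Ideal.mul_mem_left _ _ (Ideal.subset_span (Or.inr ⟨m, him, hmd, rfl⟩))
      · rw [SetLike.mem_coe, Ideal.mem_colon_span_singleton]
        have heq : X (EVar.b (⟨l - 1, by omega⟩ : Fin d)) *
              (X (EVar.a (⟨i - 1, by omega⟩ : Fin d)) * E)
            = (X (EVar.a (⟨i - 1, by omega⟩ : Fin d)) *
              X (EVar.b (⟨l - 1, by omega⟩ : Fin d))) * E := by
          ring
        rw [heq]
        exact Ideal.mul_mem_right _ _ (Ideal.subset_span (Or.inl ⟨l, i, hl1, hli, hid, rfl⟩))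
  · rw [hset, Set.ncard_image_of_injective _ X_injective]
    have hsplit : {v : EVar d r | badVar d r i v = true}
        = (EVar.a '' {j : Fin d | i ≤ j.val}) ∪ (EVar.b '' {j : Fin d | j.val + 1 < i}) := by
      ext v
      cases v with
      | a j => simp
      | b j => simp
      | e j => simp
    have hdisj : Disjoint (EVar.a '' {j : Fin d | i ≤ j.val} : Set (EVar d r))
        (EVar.b '' {j : Fin d | j.val + 1 < i} : Set (EVar d r)) := by
      rw [Set.disjoint_left]
      rintro v ⟨j, _, rfl⟩ ⟨j', _, hj'⟩
      cases hj'
    have hA : {j : Fin d | i ≤ j.val}.ncard = d - i := by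
      have h1 : {j : Fin d | i ≤ j.val}
          = ↑(Finset.univ.filter fun j : Fin d => i ≤ j.val) := by
        ext j; simp
      rw [h1, Set.ncard_coe_finset,
        ← Finset.card_image_of_injective _ Fin.val_injective]
      have h2 : (Finset.univ.filter fun j : Fin d => i ≤ j.val).image Fin.val
          = Finset.Ico i d := by
        ext n
        simp only [Finset.mem_image, Finset.mem_filter, Finset.mem_univ, true_and,
          Finset.mem_Ico]
        constructor
        · rintro ⟨j, hj, rfl⟩; exact ⟨hj, j.isLt⟩
        · rintro ⟨hn1, hn2⟩; exact ⟨⟨n, hn2⟩, hn1, rfl⟩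
      rw [h2, Nat.card_Ico]
    have hB : {j : Fin d | j.val + 1 < i}.ncard = i - 1 := by
      have h1 : {j : Fin d | j.val + 1 < i}
          = ↑(Finset.univ.filter fun j : Fin d => j.val + 1 < i) := by
        ext j; simp
      rw [h1, Set.ncard_coe_finset,
        ← Finset.card_image_of_injective _ Fin.val_injective]
      have h2 : (Finset.univ.filter fun j : Fin d => j.val + 1 < i).image Fin.val
          = Finset.range (i - 1) := by
        ext n
        simp only [Finset.mem_image, Finset.mem_filter, Finset.mem_univ, true_and,
          Finset.mem_range]
        constructor
        · rintro ⟨j, hj, rfl⟩; omega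
        · intro hn
          exact ⟨⟨n, by omega⟩, show n + 1 < i by omega, rfl⟩
      rw [h2, Finset.card_range]
    rw [hsplit, Set.ncard_union_eq hdisj (Set.Finite.image _ (Set.toFinite _))
        (Set.Finite.image _ (Set.toFinite _)),
      Set.ncard_image_of_injective _ hXa_inj, Set.ncard_image_of_injective _ hXb_inj, hA, hB]
    omega
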